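/- Let X be a hereditarily normal T1 space and let M ⊆ X be a subspace with ind M ≤ 0, i.e., every point of M has a neighborhood basis in the subspace M consisting of relatively clopen subsets of M. Then for every point x ∈ M and every closed subset A of X with x ∉ A, there exists a partition L between {x} and A in X such that L ∩ M = ∅. -/
import Mathlib


/-- The Bing–Hanner extension `τ(M)` of a topology `τ` on `X` determined by a subset `M ⊆ X`:
its open sets are exactly the sets of the form `U ∪ K` with `U` a `τ`-open set and
`K ⊆ X \ M`. -/
def bingHanner {X : Type*} (τ : TopologicalSpace X) (M : Set X) : TopologicalSpace X where
  IsOpen O := ∃ U K : Set X, τ.IsOpen U ∧ K ⊆ Mᶜ ∧ O = U ∪ K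
  isOpen_univ := ⟨Set.univ, ∅, τ.isOpen_univ, by simp, by simp⟩
  isOpen_inter := by
    rintro s t ⟨U₁, K₁, hU₁, hK₁, rfl⟩ ⟨U₂, K₂, hU₂, hK₂, rfl⟩
    refine ⟨U₁ ∩ U₂, ((U₁ ∪ K₁) ∩ (U₂ ∪ K₂)) \ (U₁ ∩ U₂),
      τ.isOpen_inter _ _ hU₁ hU₂, ?_, ?_⟩
    · rintro x ⟨⟨h1, h2⟩, hn⟩
      rcases h1 with h1 | h1
      · rcases h2 with h2 | h2
        · exact absurd ⟨h1, h2⟩ hn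
        · exact hK₂ h2
      · exact hK₁ h1
    · have hsub : U₁ ∩ U₂ ⊆ (U₁ ∪ K₁) ∩ (U₂ ∪ K₂) :=
        fun x hx => ⟨Or.inl hx.1, Or.inl hx.2⟩
      exact (Set.union_diff_cancel hsub).symm
  isOpen_sUnion := by
    intro S hS
    choose U K hU hK hEq using hS
    refine ⟨⋃ s, ⋃ h : s ∈ S, U s h, ⋃ s, ⋃ h : s ∈ S, K s h, ?_, ?_, ?_⟩
    · letI := τ
      exact isOpen_iUnion fun s => isOpen_iUnion fun h => hU s h
    · exact Set.iUnion_subset fun s => Set.iUnion_subset fun h => hK s h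
    · ext x
      simp only [Set.mem_sUnion, Set.mem_union, Set.mem_iUnion]
      constructor
      · rintro ⟨s, hs, hx⟩
        rw [hEq s hs] at hx
        rcases hx with hx | hx
        · exact Or.inl ⟨s, hs, hx⟩
        · exact Or.inr ⟨s, hs, hx⟩
      · rintro (⟨s, hs, hx⟩ | ⟨s, hs, hx⟩)
        · exact ⟨s, hs, by rw [hEq s hs]; exact Or.inl hx⟩
        · exact ⟨s, hs, by rw [hEq s hs]; exact Or.inr hx⟩

/-- `covDimLE t n` : the covering dimension of `(X, t)` is at most `n`, i.e. every finite
open cover admits a finite open refinement covering `X` in which any `n + 2` pairwise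
distinct members have empty intersection. -/
def covDimLE {X : Type*} (t : TopologicalSpace X) (n : ℕ) : Prop :=
  ∀ C : Set (Set X), C.Finite → (∀ U ∈ C, t.IsOpen U) → ⋃₀ C = Set.univ →
    ∃ V : Set (Set X), V.Finite ∧ (∀ U ∈ V, t.IsOpen U) ∧ ⋃₀ V = Set.univ ∧
      (∀ U ∈ V, ∃ W ∈ C, U ⊆ W) ∧
      ∀ F : Finset (Set X), ↑F ⊆ V → F.card = n + 2 → ⋂₀ (F : Set (Set X)) = ∅

/-- `IndLE0 t` : the large inductive dimension of `(Z, t)` is at most `0`, i.e. any two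
disjoint closed sets are separated by a clopen set. -/
def IndLE0 {Z : Type*} (t : TopologicalSpace Z) : Prop :=
  ∀ A B : Set Z, @IsClosed Z t A → @IsClosed Z t B → Disjoint A B →
    ∃ U : Set Z, t.IsOpen U ∧ @IsClosed Z t U ∧ A ⊆ U ∧ U ∩ B = ∅

/-- `indLE0 t` : the small inductive dimension of `(Z, t)` is at most `0`, i.e. every point
has a neighborhood basis of clopen sets. -/
def indLE0 {Z : Type*} (t : TopologicalSpace Z) : Prop :=
  ∀ (x : Z) (O : Set Z), t.IsOpen O → x ∈ O →
    ∃ U : Set Z, t.IsOpen U ∧ @IsClosed Z t U ∧ x ∈ U ∧ U ⊆ O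

/-- `L` is a partition between `A` and `B` in `(X, t)`. -/
def isPartitionBetween {X : Type*} (t : TopologicalSpace X) (A B L : Set X) : Prop :=
  ∃ U V : Set X, t.IsOpen U ∧ t.IsOpen V ∧ Disjoint U V ∧ A ⊆ U ∧ B ⊆ V ∧ L = (U ∪ V)ᶜ

/-- If `X` is hereditarily normal `T₁` and `M ⊆ X` satisfies `ind M ≤ 0`,
then for every `x ∈ M` and closed `A ⊆ X` with `x ∉ A` there is a partition `L` between
`{x}` and `A` with `L ∩ M = ∅`. -/
theorem partition_avoiding_indZero_subspace {X : Type*} (τ : TopologicalSpace X)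
    (hT5 : @T5Space X τ) (M : Set X)
    (hM : indLE0 (TopologicalSpace.induced (Subtype.val : M → X) τ))
    (x : X) (hx : x ∈ M) (A : Set X) (hA : @IsClosed X τ A) (hxA : x ∉ A) :
    ∃ L : Set X, isPartitionBetween τ {x} A L ∧ L ∩ M = ∅ := by
  letI := τ
  haveI := hT5
  -- separate x from A by normality
  obtain ⟨W, V0, hW, hV0, hxW, hAV0, hWV0⟩ :=
    NormalSpace.normal {x} A isClosed_singleton hA (by simpa using hxA)
  have hxW' : x ∈ W := hxW rfl
  -- clopen-in-M neighborhood of x inside W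
  obtain ⟨U, hUopen, hUclosed, hxU, hUW⟩ :=
    hM ⟨x, hx⟩ (Subtype.val ⁻¹' W) ⟨W, hW, rfl⟩ hxW'
  obtain ⟨G, hG, hGU⟩ := hUopen
  obtain ⟨F, hF, hFU⟩ := isClosed_induced_iff.mp hUclosed
  set C : Set X := Subtype.val '' U with hC
  have hCG : C = G ∩ M := by
    rw [hC, ← hGU, Subtype.image_preimage_coe, Set.inter_comm]
  have hCF : C = F ∩ M := by
    rw [hC, ← hFU, Subtype.image_preimage_coe, Set.inter_comm]
  have hCM : C ⊆ M := by rw [hCG]; exact Set.inter_subset_right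
  have hCW : C ⊆ W := by
    rintro _ ⟨u, hu, rfl⟩
    exact hUW hu
  have hxC : x ∈ C := ⟨⟨x, hx⟩, hxU, rfl⟩
  -- the two separated sets
  have h1 : Disjoint (closure C) ((M \ C) ∪ A) := by
    rw [Set.disjoint_union_right]
    constructor
    · rw [Set.disjoint_left]
      rintro z hz ⟨hzM, hzC⟩
      have : z ∈ F := closure_minimal (hCF ▸ Set.inter_subset_left) hF hz
      exact hzC (hCF ▸ ⟨this, hzM⟩)
    · have : closure C ⊆ closure W := closure_mono hCW
      have hWc : closure W ⊆ V0ᶜ :=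
        closure_minimal (Set.disjoint_left.mp hWV0) hV0.isClosed_compl
      exact Set.disjoint_left.mpr fun z hz hzA => hWc (this hz) (hAV0 hzA)
  have h2 : Disjoint C (closure ((M \ C) ∪ A)) := by
    rw [closure_union, Set.disjoint_union_right, hA.closure_eq]
    constructor
    · have hsub : M \ C ⊆ Gᶜ := by
        rintro z ⟨hzM, hzC⟩ hzG
        exact hzC (hCG ▸ ⟨hzG, hzM⟩)
      have : closure (M \ C) ⊆ Gᶜ := closure_minimal hsub (isClosed_compl_iff.mpr hG)
      exact Set.disjoint_left.mpr fun z hz hz' => this hz' (hCG ▸ hz).1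
    · exact Set.disjoint_left.mpr fun z hz hzA =>
        Set.disjoint_left.mp hWV0 (hCW hz) (hAV0 hzA)
  obtain ⟨P, Q, hP, hQ, hCP, hFQ, hPQ⟩ :=
    separatedNhds_iff_disjoint.mpr (CompletelyNormalSpace.completely_normal h1 h2)
  refine ⟨(P ∪ Q)ᶜ, ⟨P, Q, hP, hQ, hPQ, ?_, ?_, rfl⟩, ?_⟩
  · exact fun z hz => hCP (hz ▸ hxC)
  · exact fun z hz => hFQ (Or.inr hz)
  · ext z
    simp only [Set.mem_inter_iff, Set.mem_compl_iff, Set.mem_union, Set.mem_empty_iff_false,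
      iff_false, not_and]
    intro hz hzM
    by_cases hzC : z ∈ C
    · exact hz (Or.inl (hCP hzC))
    · exact hz (Or.inr (hFQ (Or.inl ⟨hzM, hzC⟩)))
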